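/- Lemma 4(i): Let P satisfy Σ, let <_L be the left-subterm ordering, assumed to be a linear order compatible as in Theorem 1(i) and (vi). If w, a, b₀, ..., b_n ∈ P, the term w·b₀·b₁·...·b_{n-1} ∗ b_n is prenormal with respect to <_L (i.e., b₂ ≤_L w, b₃ ≤_L w·b₀, ..., b_n ≤_L w·b₀·...·b_{n-2}, and if ∗ = ∘ and n ≥ 2 also b_n <_L w·b₀·...·b_{n-1}), and b₀ <_L a, then w·b₀·b₁·...·b_{n-1} ∗ b_n <_L w·a. -/
import Mathlib


/-- r <_L s : s = r·a₀·...·a_{n-1} ∗ a_n with ∗ ∈ {·, ∘}. -/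
def ltLP {P : Type*} (mul comp : P → P → P) (r s : P) : Prop :=
  ∃ (l : List P) (a : P),
    s = mul (List.foldl mul r l) a ∨ s = comp (List.foldl mul r l) a

/-- a ≤_L b. -/
def leLP {P : Type*} (mul comp : P → P → P) (r s : P) : Prop :=
  ltLP mul comp r s ∨ r = s

/-- Lemma 4(i): if the term w·b₀·b₁·...·b_{n-1} ∗ b_n is prenormal with respect to <_L
(each b_k with 1 ≤ k ≤ n satisfies b_k ≤_L w·b₀·...·b_{k-2}, and if ∗ = ∘ and n ≥ 2
also b_n <_L w·b₀·...·b_{n-1}) and b₀ <_L a, then w·b₀·...·b_{n-1} ∗ b_n <_L w·a.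
Here `star = true` encodes ∗ = ∘ and `star = false` encodes ∗ = ·;
`pre k` denotes the left-associated product w·b₀·...·b_{k-1}. -/
theorem prenormal_ltLP_mul {P : Type*} (mul comp : P → P → P)
    (hassoc : ∀ a b c, comp a (comp b c) = comp (comp a b) c)
    (hmix : ∀ a b c, mul (comp a b) c = mul a (mul b c))
    (hdist : ∀ a b c, mul a (comp b c) = comp (mul a b) (mul a c))
    (habs : ∀ a b, comp a b = comp (mul a b) a)
    (hirr : ∀ a : P, ¬ ltLP mul comp a a)
    (htrans : ∀ a b c : P, ltLP mul comp a b → ltLP mul comp b c → ltLP mul comp a c)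
    (htri : ∀ a b : P, ltLP mul comp a b ∨ a = b ∨ ltLP mul comp b a)
    (hthm1i : ∀ p r s : P, ltLP mul comp r s →
      ltLP mul comp (mul p r) (comp p r) ∧ ltLP mul comp (comp p r) (mul p s))
    (hcancel : ∀ p q r : P, (ltLP mul comp (mul p q) (mul p r) ↔ ltLP mul comp q r))
    (w a : P) (n : ℕ) (b : ℕ → P) (star : Bool)
    (pre : ℕ → P) (hpre : ∀ k, pre k = List.foldl mul w ((List.range k).map b))
    (hprenorm : ∀ k, 1 ≤ k → k ≤ n → leLP mul comp (b k) (pre (k - 1)))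
    (hcirc : star = true → 2 ≤ n → ltLP mul comp (b n) (pre n))
    (hb0 : ltLP mul comp (b 0) a) :
    ltLP mul comp (if star then comp (pre n) (b n) else mul (pre n) (b n)) (mul w a) := by
  have hpre0 : pre 0 = w := by simp [hpre]
  have hpres : ∀ k, pre (k + 1) = mul (pre k) (b k) := by
    intro k
    rw [hpre, hpre, List.range_succ, List.map_append, List.foldl_append]
    simp
  have hltmul : ∀ r x : P, ltLP mul comp r (mul r x) :=
    fun r x => ⟨[], x, Or.inl rfl⟩
  have hmc : ∀ p r : P, ltLP mul comp (mul p r) (comp p r) :=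
    fun p r => (hthm1i p r (mul r r) (hltmul r r)).1
  have key : ∀ k, k ≤ n → ltLP mul comp (comp (pre k) (b k)) (mul w a) := by
    intro k
    induction k with
    | zero =>
      intro _
      rw [hpre0]
      exact (hthm1i w (b 0) a hb0).2
    | succ k ih =>
      intro hk
      have ihk := ih (by omega)
      have hle := hprenorm (k + 1) (by omega) hk
      rcases hle with hlt | heq
      · -- b (k+1) <_L pre k
        have h1 : ltLP mul comp (comp (pre (k+1)) (b (k+1))) (mul (pre (k+1)) (pre k)) :=
          (hthm1i (pre (k+1)) (b (k+1)) (pre k) hlt).2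
        have h2 : ltLP mul comp (mul (pre (k+1)) (pre k)) (comp (pre (k+1)) (pre k)) :=
          hmc _ _
        have h3 : comp (pre (k+1)) (pre k) = comp (pre k) (b k) := by
          rw [hpres, ← habs]
        exact htrans _ _ _ h1 (htrans _ _ _ h2 (h3 ▸ ihk))
      · -- b (k+1) = pre k
        have h3 : comp (pre (k+1)) (b (k+1)) = comp (pre k) (b k) := by
          rw [heq, hpres, show k + 1 - 1 = k from rfl, ← habs]
        exact h3 ▸ ihk
  cases star with
  | true =>
    show ltLP mul comp (comp (pre n) (b n)) (mul w a)
    exact key n le_rfl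
  | false =>
    show ltLP mul comp (mul (pre n) (b n)) (mul w a)
    exact htrans _ _ _ (hmc (pre n) (b n)) (key n le_rfl)
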